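/- There is a computable tournament on ℕ with no infinite limit-computable (Δ⁰₂) transitive subtournament: there exists a computable function T : ℕ → ℕ → Bool with T x x = false for all x and, for all x ≠ y, exactly one of T x y, T y x equal to true, such that for every computable g : ℕ → ℕ → Bool for which the limit D(x) = lim_{s→∞} g x s exists for every x (i.e., for each x the sequence s ↦ g x s is eventually constant), the set {x | D(x) = true} is not an infinite set transitive for T. -/

import Mathlib

open Nat.Partrec (Code)
open Nat.Partrec.Code


/-- `S` is transitive for the tournament `T`. -/
def TransitiveFor (T : ℕ → ℕ → Prop) (S : Set ℕ) : Prop :=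
  ∀ x ∈ S, ∀ y ∈ S, ∀ z ∈ S, T x y → T y z → T x z


namespace EMC


/-- time-bounded evaluation of code `e` at `(x, s)` with bound `y`. -/
def evB (e x y s : ℕ) : Option ℕ := evaln y (Denumerable.ofNat Code e) (Nat.pair x s)

/-- largest `s < n` such that `evB e x y s` halts. -/
def bestS (e x y : ℕ) : ℕ → Option ℕ
  | 0 => none
  | n+1 => cond (evB e x y n).isSome (some n) (bestS e x y n)

/-- stage-`y` guess at whether `x` is in the limit set of code `e`. -/
def gval (e x y : ℕ) : Bool :=
  ((bestS e x y (y+1)).bind fun s => evB e x y s).getD 0 == 1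

/-- `x` avoids the (optional) pair `op`. -/
def pdisj (x : ℕ) : Option (ℕ × ℕ) → Bool
  | none => true
  | some q => !(x == q.1) && !(x == q.2)

/-- `x` avoids the first `n` entries of `L`. -/
def disjUpTo (L : List (Option (ℕ × ℕ))) (x : ℕ) : ℕ → Bool
  | 0 => true
  | n+1 => disjUpTo L x n && pdisj x (L.getD n none)

/-- eligibility of the pair `(a,b)` for requirement `e` at stage `y`, given prior pairs `L`. -/
def elig (L : List (Option (ℕ × ℕ))) (e y a b : ℕ) : Bool :=
  decide (a < b) && gval e a y && gval e b y &&
    disjUpTo L a L.length && disjUpTo L b L.length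

/-- least eligible pair, searching codes `k < n` as `(k % y, k / y)`. -/
def pick (L : List (Option (ℕ × ℕ))) (e y : ℕ) : ℕ → Option (ℕ × ℕ)
  | 0 => none
  | k+1 => match pick L e y k with
    | some p => some p
    | none => cond (elig L e y (k % y) (k / y)) (some (k % y, k / y)) none

/-- the list of chosen pairs for requirements `0, …, n-1` at stage `y`. -/
def PL (y : ℕ) : ℕ → List (Option (ℕ × ℕ))
  | 0 => []
  | e+1 => PL y e ++ [pick (PL y e) e y (y*y)]

/-- the (unique) chosen pair containing `x`, among the first `n` entries of `L`. -/
def owner (L : List (Option (ℕ × ℕ))) (x : ℕ) : ℕ → Option (ℕ × ℕ)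
  | 0 => none
  | n+1 => match owner L x n with
    | some p => some p
    | none => match L.getD n none with
      | none => none
      | some q => cond (x == q.1 || x == q.2) (some q) none

/-- given the history of previous columns, compute the next column. -/
def colF (hist : List (List Bool)) : List Bool :=
  (List.range hist.length).map fun x =>
    match owner (PL hist.length (hist.length + 1)) x (hist.length + 1) with
    | none => true
    | some q => cond (x == q.1) (!((hist.getD q.2 []).getD q.1 true))
        ((hist.getD q.2 []).getD q.1 true)

/-- the column of the tournament at `y` : entry `x < y` is `TT x y`. -/
def col : ℕ → List Bool
  | y => colF ((List.range y).attach.map fun i => col i.1)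
  decreasing_by exact List.mem_range.1 i.2

/-- the tournament. -/
def TT (x y : ℕ) : Bool :=
  if x = y then false
  else if x < y then (col y).getD x true
  else !((col x).getD y true)

theorem col_eq (y : ℕ) : col y = colF ((List.range y).map col) := by
  rw [col]
  congr 1
  exact List.attach_map_val

theorem col_length (y : ℕ) : (col y).length = y := by
  rw [col_eq]; simp [colF]

theorem TT_irrefl (x : ℕ) : TT x x = false := by simp [TT]

theorem TT_asymm {x y : ℕ} (h : x ≠ y) : TT x y = !TT y x := by
  rcases Nat.lt_or_ge x y with hlt | hge
  · simp [TT, h, h.symm, hlt, Nat.not_lt.2 hlt.le]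
  · have hlt : y < x := lt_of_le_of_ne hge (Ne.symm h)
    simp [TT, h, h.symm, hlt, Nat.not_lt.2 hlt.le]


theorem bestS_spec {e x y n s : ℕ} (h : bestS e x y n = some s) :
    s < n ∧ (evB e x y s).isSome := by
  induction n with
  | zero => simp [bestS] at h
  | succ n ih =>
    rw [bestS] at h
    cases hb : (evB e x y n).isSome with
    | true => rw [hb] at h; simp at h; subst h; exact ⟨Nat.lt_succ_self _, hb⟩
    | false =>
      rw [hb] at h; simp at h
      obtain ⟨h1, h2⟩ := ih h
      exact ⟨h1.trans (Nat.lt_succ_self _), h2⟩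

theorem bestS_ge {e x y : ℕ} : ∀ {n s₀ : ℕ}, s₀ < n → (evB e x y s₀).isSome →
    ∃ s, bestS e x y n = some s ∧ s₀ ≤ s := by
  intro n
  induction n with
  | zero => intro s₀ h; omega
  | succ n ih =>
    intro s₀ h0 hsome
    rw [bestS]
    cases hb : (evB e x y n).isSome with
    | true => exact ⟨n, by simp, by omega⟩
    | false =>
      have hne : s₀ ≠ n := by rintro rfl; rw [hsome] at hb; exact Bool.noConfusion hb
      obtain ⟨s, hs, hle⟩ := ih (by omega) hsome
      exact ⟨s, by simp [hs], hle⟩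

/-- Limit lemma for the guesses. -/
theorem gval_lim {c : Code} {g : ℕ → ℕ → Bool} {D : ℕ → Bool}
    (hc : eval c = fun n => Part.some ((g n.unpair.1 n.unpair.2).toNat))
    (hD : ∀ x, ∃ s₀, ∀ s, s₀ ≤ s → g x s = D x) (x : ℕ) :
    ∃ Y, ∀ y, Y ≤ y → gval (Encodable.encode c) x y = D x := by
  obtain ⟨s₀, hs₀⟩ := hD x
  have hmem : (g x s₀).toNat ∈ eval c (Nat.pair x s₀) := by
    rw [hc]; simp
  obtain ⟨k, hk⟩ := evaln_complete.1 hmem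
  refine ⟨max k (s₀ + 1), fun y hy => ?_⟩
  have hky : k ≤ y := le_trans (le_max_left _ _) hy
  have hs₀y : s₀ < y + 1 := by
    have := le_trans (le_max_right _ _) hy; omega
  have hsome : (evB (Encodable.encode c) x y s₀).isSome := by
    rw [evB, Denumerable.ofNat_encode]
    exact Option.isSome_iff_exists.2 ⟨_, evaln_mono hky hk⟩
  obtain ⟨s, hs, hles⟩ := bestS_ge hs₀y hsome
  have hsx := bestS_spec hs
  obtain ⟨v, hv⟩ := Option.isSome_iff_exists.1 hsx.2
  have hv' : v ∈ eval c (Nat.pair x s) := by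
    have := hv; rw [evB, Denumerable.ofNat_encode] at this
    exact evaln_sound this
  rw [hc] at hv'
  rw [Part.mem_some_iff] at hv'
  have hgs : g x s = D x := hs₀ s hles
  rw [gval, hs]
  simp only [Option.bind_some, hv, Option.getD_some]
  subst hv'
  rw [Nat.unpair_pair]
  simp only []
  rw [hgs]
  cases D x <;> rfl

theorem pdisj_iff {x : ℕ} {op : Option (ℕ × ℕ)} :
    pdisj x op = true ↔ ∀ a b, op = some (a, b) → x ≠ a ∧ x ≠ b := by
  cases op with
  | none => simp [pdisj]
  | some q =>
    obtain ⟨a, b⟩ := q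
    simp only [pdisj, Bool.and_eq_true, Bool.not_eq_true', beq_eq_false_iff_ne,
      Option.some.injEq, Prod.mk.injEq]
    constructor
    · rintro ⟨h1, h2⟩ a' b' ⟨rfl, rfl⟩; exact ⟨h1, h2⟩
    · intro h; exact h a b ⟨rfl, rfl⟩

theorem disjUpTo_iff {L : List (Option (ℕ × ℕ))} {x : ℕ} : ∀ {n : ℕ},
    disjUpTo L x n = true ↔ ∀ m < n, pdisj x (L.getD m none) = true := by
  intro n
  induction n with
  | zero => simp [disjUpTo]
  | succ n ih =>
    rw [disjUpTo, Bool.and_eq_true, ih]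
    constructor
    · rintro ⟨h1, h2⟩ m hm
      rcases Nat.lt_succ_iff_lt_or_eq.1 hm with h | rfl
      · exact h1 m h
      · exact h2
    · intro h
      exact ⟨fun m hm => h m (hm.trans (Nat.lt_succ_self _)), h n (Nat.lt_succ_self _)⟩

/-- `pick` finds the least eligible index, if any. -/
theorem pick_spec (L : List (Option (ℕ × ℕ))) (e y : ℕ) : ∀ n : ℕ,
    (pick L e y n = none ∧ ∀ j < n, elig L e y (j % y) (j / y) = false) ∨
    (∃ j < n, pick L e y n = some (j % y, j / y) ∧ elig L e y (j % y) (j / y) = true ∧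
      ∀ i < j, elig L e y (i % y) (i / y) = false) := by
  intro n
  induction n with
  | zero => left; exact ⟨rfl, by omega⟩
  | succ n ih =>
    rcases ih with ⟨h1, h2⟩ | ⟨j, hj, h1, h2, h3⟩
    · rw [pick, h1]
      cases he : elig L e y (n % y) (n / y) with
      | true =>
        right
        exact ⟨n, Nat.lt_succ_self _, by simp, he, h2⟩
      | false =>
        left
        refine ⟨by simp, fun j hj => ?_⟩
        rcases Nat.lt_succ_iff_lt_or_eq.1 hj with h | rfl
        · exact h2 j h
        · exact he
    · right
      refine ⟨j, hj.trans (Nat.lt_succ_self _), ?_, h2, h3⟩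
      rw [pick, h1]

theorem PL_length (y : ℕ) : ∀ n, (PL y n).length = n := by
  intro n
  induction n with
  | zero => rfl
  | succ n ih => rw [PL]; simp [ih]

theorem PL_getD {y : ℕ} : ∀ {n e : ℕ}, e < n →
    (PL y n).getD e none = pick (PL y e) e y (y*y) := by
  intro n
  induction n with
  | zero => intro e h; omega
  | succ n ih =>
    intro e he
    rw [PL]
    rcases Nat.lt_succ_iff_lt_or_eq.1 he with h | rfl
    · rw [List.getD_append _ _ _ _ (by rw [PL_length]; exact h)]
      exact ih h
    · rw [List.getD_eq_getElem?_getD, List.getElem?_append_right (by rw [PL_length])]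
      simp [PL_length]


theorem elig_lt {L e y a b} (h : elig L e y a b = true) :
    a < b ∧ gval e a y = true ∧ gval e b y = true ∧
      disjUpTo L a L.length = true ∧ disjUpTo L b L.length = true := by
  rw [elig] at h
  simp only [Bool.and_eq_true, decide_eq_true_eq] at h
  tauto

/-- entries of `PL` are pairwise disjoint pairs. -/
theorem PL_disj {y n e₁ e₂ a₁ b₁ a₂ b₂ : ℕ} (h12 : e₁ < e₂) (h2 : e₂ < n)
    (hg1 : (PL y n).getD e₁ none = some (a₁, b₁))
    (hg2 : (PL y n).getD e₂ none = some (a₂, b₂)) :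
    a₂ ≠ a₁ ∧ a₂ ≠ b₁ ∧ b₂ ≠ a₁ ∧ b₂ ≠ b₁ := by
  rw [PL_getD h2] at hg2
  rw [PL_getD (h12.trans h2)] at hg1
  rcases pick_spec (PL y e₂) e₂ y (y*y) with ⟨hn, _⟩ | ⟨j, hj, hs, he, _⟩
  · rw [hn] at hg2; exact absurd hg2 (by simp)
  · rw [hs] at hg2
    obtain ⟨rfl, rfl⟩ : j % y = a₂ ∧ j / y = b₂ := by
      have := hg2; simp at this; tauto
    obtain ⟨_, _, _, hda, hdb⟩ := elig_lt he
    have h1' : (PL y e₂).getD e₁ none = some (a₁, b₁) := by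
      rw [PL_getD h12]; exact hg1
    have hlen : (PL y e₂).length = e₂ := PL_length y e₂
    have hpa := (disjUpTo_iff.1 hda) e₁ (by rw [hlen]; exact h12)
    have hpb := (disjUpTo_iff.1 hdb) e₁ (by rw [hlen]; exact h12)
    rw [h1'] at hpa hpb
    obtain ⟨x1, x2⟩ := pdisj_iff.1 hpa a₁ b₁ rfl
    obtain ⟨x3, x4⟩ := pdisj_iff.1 hpb a₁ b₁ rfl
    exact ⟨x1, x2, x3, x4⟩

theorem owner_mem {L x} : ∀ {n p}, owner L x n = some p →
    ∃ e < n, L.getD e none = some p ∧ (x = p.1 ∨ x = p.2) := by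
  intro n
  induction n with
  | zero => intro p h; exact absurd h (by simp [owner])
  | succ n ih =>
    intro p h
    rw [owner] at h
    rcases ho : owner L x n with _ | q
    · rw [ho] at h
      simp only [] at h
      rcases hL : L.getD n none with _ | q'
      · rw [hL] at h; exact absurd h (by simp)
      · rw [hL] at h
        dsimp only at h
        cases hb : (x == q'.1 || x == q'.2) with
        | false => rw [hb] at h; exact absurd h (by simp)
        | true =>
          rw [hb] at h
          simp only [cond_true, Option.some.injEq] at h
          subst h
          have : (x == q'.1) = true ∨ (x == q'.2) = true := by simpa using hb
          refine ⟨n, Nat.lt_succ_self _, hL, ?_⟩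
          rcases this with h | h
          · exact Or.inl (by simpa using h)
          · exact Or.inr (by simpa using h)
    · rw [ho] at h
      simp only [Option.some.injEq] at h
      subst h
      obtain ⟨e, he, h1, h2⟩ := ih ho
      exact ⟨e, he.trans (Nat.lt_succ_self _), h1, h2⟩

theorem owner_isSome {L x n e a b} (he : e < n) (hL : L.getD e none = some (a, b))
    (hx : x = a ∨ x = b) : (owner L x n).isSome := by
  induction n with
  | zero => omega
  | succ n ih =>
    rw [owner]
    rcases ho : owner L x n with _ | q
    · simp only []
      rcases Nat.lt_succ_iff_lt_or_eq.1 he with h | rfl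
      · have := ih h; rw [ho] at this; simp at this
      · rw [hL]
        dsimp only
        have hb : (x == a || x == b) = true := by
          rcases hx with rfl | rfl <;> simp
        rw [hb]; rfl
    · rfl


theorem col_read {y x a b : ℕ} (hx : x < y) (hb : b < y)
    (hown : owner (PL y (y+1)) x (y+1) = some (a, b)) :
    (col y).getD x true = cond (x == a) (!((col b).getD a true)) ((col b).getD a true) := by
  conv_lhs => rw [col_eq]
  have hcolb : ((List.range y).map col).getD b [] = col b := by
    rw [List.getD_eq_getElem?_getD, List.getElem?_map, List.getElem?_range hb]
    rfl
  have hlen : ((List.range y).map col).length = y := by simp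
  rw [colF, hlen, List.getD_eq_getElem?_getD, List.getElem?_map, List.getElem?_range hx]
  rw [Option.map_some, Option.getD_some, hown]
  dsimp only
  rw [hcolb]

theorem TT_eq_col {x y : ℕ} (h : x < y) : TT x y = (col y).getD x true := by
  rw [TT, if_neg (Nat.ne_of_lt h), if_pos h]

theorem stab_below {e : ℕ} {D : ℕ → Bool}
    (h : ∀ x, ∃ Y, ∀ y, Y ≤ y → gval e x y = D x) (B : ℕ) :
    ∃ Y, ∀ x ≤ B, ∀ y, Y ≤ y → gval e x y = D x := by
  induction B with
  | zero =>
    obtain ⟨Y, hY⟩ := h 0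
    exact ⟨Y, fun x hx y hy => by simpa [Nat.le_zero.1 hx] using hY y hy⟩
  | succ B ih =>
    obtain ⟨Y₁, hY₁⟩ := ih
    obtain ⟨Y₂, hY₂⟩ := h (B+1)
    refine ⟨max Y₁ Y₂, fun x hx y hy => ?_⟩
    rcases Nat.lt_succ_iff_lt_or_eq.1 (Nat.lt_succ_of_le hx) with h' | rfl
    · exact hY₁ x (by omega) y (le_trans (le_max_left _ _) hy)
    · exact hY₂ y (le_trans (le_max_right _ _) hy)

def optVerts : Option (ℕ × ℕ) → Finset ℕ
  | none => ∅
  | some q => {q.1, q.2}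

theorem optVerts_card (op : Option (ℕ × ℕ)) : (optVerts op).card ≤ 2 := by
  cases op with
  | none => simp [optVerts]
  | some q => exact le_trans (Finset.card_insert_le _ _) (by simp [optVerts])

/-- The heart of the matter. -/
theorem main {g : ℕ → ℕ → Bool} (hg : Computable₂ g) {D : ℕ → Bool}
    (hlim : ∀ x, ∃ s₀, ∀ s, s₀ ≤ s → g x s = D x)
    (hinf : {x | D x = true}.Infinite)
    (htr : TransitiveFor (fun x y => TT x y = true) {x | D x = true}) : False := by
  classical
  set S := {x | D x = true} with hS
  -- get a code for g
  have hτ : Computable fun n : ℕ => (g n.unpair.1 n.unpair.2).toNat := by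
    have h1 : Computable fun n : ℕ => g n.unpair.1 n.unpair.2 :=
      hg.comp (Computable.fst.comp Computable.unpair) (Computable.snd.comp Computable.unpair)
    exact Computable.cond h1 (Computable.const 1) (Computable.const 0)
  have hpr : Nat.Partrec fun n : ℕ => ((fun n : ℕ => (g n.unpair.1 n.unpair.2).toNat) n : Part ℕ) :=
    Partrec.nat_iff.1 hτ.partrec
  obtain ⟨c, hc⟩ := exists_code.1 hpr
  set e := Encodable.encode c with he
  have hstab : ∀ x, ∃ Y, ∀ y, Y ≤ y → gval e x y = D x := by
    intro x
    exact gval_lim (by rw [hc]; rfl) hlim x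
  -- a finite chunk of S of size 2e+2
  obtain ⟨t, hts, htfin, htcard⟩ := hinf.exists_subset_ncard_eq (2*e+2)
  set F := htfin.toFinset with hF
  have hFcard : F.card = 2*e+2 := by
    rw [hF, ← Set.ncard_eq_toFinset_card t htfin, htcard]
  have hFS : ∀ x ∈ F, x ∈ S := fun x hx => hts (htfin.mem_toFinset.1 hx)
  have hFne : F.Nonempty := Finset.card_pos.1 (by omega)
  set B := F.max' hFne with hB
  have hFB : ∀ x ∈ F, x ≤ B := fun x hx => F.le_max' x hx
  obtain ⟨Y₀, hY₀⟩ := stab_below hstab B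
  -- a large element y of S
  obtain ⟨y, hyS, hylarge⟩ : ∃ y ∈ S, max Y₀ (max B e) < y := by
    obtain ⟨y, hy⟩ := (hinf.diff (Set.finite_Iic (max Y₀ (max B e)))).nonempty
    exact ⟨y, hy.1, by simpa using hy.2⟩
  have hY₀y : Y₀ ≤ y := by omega
  have hBy : B < y := by omega
  have hey : e < y := by omega
  -- the excluded vertex set at stage y
  set P := PL y e with hP
  set E := (Finset.range e).biUnion (fun e' => optVerts (P.getD e' none)) with hE
  have hEcard : E.card ≤ 2*e := by
    refine le_trans (Finset.card_biUnion_le) ?_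
    calc ∑ e' ∈ Finset.range e, (optVerts (P.getD e' none)).card
        ≤ ∑ _e' ∈ Finset.range e, 2 := Finset.sum_le_sum fun i _ => optVerts_card _
      _ = 2*e := by simp [Nat.mul_comm]
  -- two surviving elements of F
  have h2 : 1 < (F \ E).card := by
    have := Finset.le_card_sdiff E F
    omega
  obtain ⟨a, ha, b, hb, hab⟩ := Finset.one_lt_card.1 h2
  -- wlog a < b
  obtain ⟨a, b, haF, hbF, haltb⟩ : ∃ a b, a ∈ F \ E ∧ b ∈ F \ E ∧ a < b := by
    rcases Nat.lt_or_ge a b with h | h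
    · exact ⟨a, b, ha, hb, h⟩
    · exact ⟨b, a, hb, ha, lt_of_le_of_ne h (Ne.symm hab)⟩
  clear ha hb hab
  have haS : a ∈ S := hFS a (Finset.mem_sdiff.1 haF).1
  have hbS : b ∈ S := hFS b (Finset.mem_sdiff.1 hbF).1
  have haB : a ≤ B := hFB a (Finset.mem_sdiff.1 haF).1
  have hbB : b ≤ B := hFB b (Finset.mem_sdiff.1 hbF).1
  have hgva : gval e a y = true := by rw [hY₀ a haB y hY₀y]; exact haS
  have hgvb : gval e b y = true := by rw [hY₀ b hbB y hY₀y]; exact hbS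
  -- disjointness of a, b from earlier entries
  have hdisj : ∀ x, x ∈ F \ E → disjUpTo P x P.length = true := by
    intro x hx
    rw [disjUpTo_iff]
    intro m hm
    rw [pdisj_iff]
    rintro p q hpq
    have hmE : m < e := by
      have := hm; rwa [hP, PL_length] at this
    have hsub : p ∈ E ∧ q ∈ E := by
      constructor <;>
      · rw [hE]
        refine Finset.mem_biUnion.2 ⟨m, Finset.mem_range.2 hmE, ?_⟩
        rw [hpq]
        simp [optVerts]
    have hxE := (Finset.mem_sdiff.1 hx).2
    constructor
    · rintro rfl; exact hxE hsub.1
    · rintro rfl; exact hxE hsub.2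
  -- (a, b) is eligible
  have helig : elig P e y a b = true := by
    rw [elig]
    simp only [Bool.and_eq_true, decide_eq_true_eq]
    exact ⟨⟨⟨⟨haltb, hgva⟩, hgvb⟩, hdisj a haF⟩, hdisj b hbF⟩
  -- so pick finds some pair, at an index ≤ j₀
  have hay : a < y := by omega
  have hby : b < y := by omega
  have hj₀mod : (a + b * y) % y = a := by
    rw [Nat.add_mul_mod_self_right, Nat.mod_eq_of_lt hay]
  have hj₀div : (a + b * y) / y = b := by
    rw [Nat.add_mul_div_right _ _ (by omega : 0 < y), Nat.div_eq_of_lt hay, Nat.zero_add]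
  have hj₀lt : a + b * y < y * y := by
    calc a + b * y < y + b * y := by omega
      _ = (b + 1) * y := by ring
      _ ≤ y * y := Nat.mul_le_mul_right _ (by omega)
  rcases pick_spec P e y (y*y) with ⟨_, hnone⟩ | ⟨j, hjlt, hpick, helig', hmin⟩
  · have := hnone _ hj₀lt
    rw [hj₀mod, hj₀div, helig] at this
    exact Bool.noConfusion this
  set a' := j % y with ha'
  set b' := j / y with hb'
  have hjle : j ≤ a + b * y := by
    rcases Nat.lt_or_ge (a + b * y) j with hlt | hge
    · exfalso
      have hx := hmin (a + b * y) hlt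
      rw [hj₀mod, hj₀div, helig] at hx
      exact Bool.noConfusion hx
    · exact hge
  have hb'B : b' ≤ B := by
    have : j / y ≤ (a + b * y) / y := Nat.div_le_div_right hjle
    rw [hj₀div] at this
    omega
  obtain ⟨ha'b', hgva', hgvb', _, _⟩ := elig_lt helig'
  have ha'B : a' ≤ B := by omega
  have ha'S : a' ∈ S := by
    have := hY₀ a' ha'B y hY₀y
    rw [this] at hgva'
    exact hgva'
  have hb'S : b' ∈ S := by
    have := hY₀ b' hb'B y hY₀y
    rw [this] at hgvb'
    exact hgvb'
  -- the chosen pair is entry e of PL y (y+1)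
  have hentry : (PL y (y+1)).getD e none = some (a', b') := by
    rw [PL_getD (by omega : e < y + 1), ← hP, hpick]
  -- owners
  have howner : ∀ x, (x = a' ∨ x = b') → owner (PL y (y+1)) x (y+1) = some (a', b') := by
    intro x hx
    have hsome := owner_isSome (by omega : e < y + 1) hentry hx
    obtain ⟨p, hp⟩ := Option.isSome_iff_exists.1 hsome
    obtain ⟨e', he'lt, hgete', hxp⟩ := owner_mem hp
    obtain ⟨p1, p2⟩ := p
    have : e' = e := by
      by_contra hne
      rcases Nat.lt_or_ge e' e with h | h
      · obtain ⟨d1, d2, d3, d4⟩ := PL_disj h (by omega : e < y+1) hgete' hentry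
        simp only [] at hxp
        rcases hx with rfl | rfl <;> rcases hxp with rfl | rfl <;> tauto
      · have h' : e < e' := by omega
        obtain ⟨d1, d2, d3, d4⟩ := PL_disj h' he'lt hentry hgete'
        simp only [] at hxp
        rcases hx with rfl | rfl <;> rcases hxp with rfl | rfl <;> tauto
    subst this
    rw [hgete'] at hentry
    rw [hp, hentry]
  -- reading off the edges
  have ha'y : a' < y := by omega
  have hb'y : b' < y := by omega
  set o := TT a' b' with ho
  have hoeq : (col b').getD a' true = o := (TT_eq_col ha'b').symm
  have hTa : TT a' y = !o := by
    rw [TT_eq_col ha'y, col_read ha'y hb'y (howner a' (Or.inl rfl)), hoeq]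
    simp
  have hTb : TT b' y = o := by
    rw [TT_eq_col hb'y, col_read hb'y hb'y (howner b' (Or.inr rfl)), hoeq]
    have : (b' == a') = false := by
      simp [Nat.ne_of_gt ha'b']
    rw [this]
    rfl
  have hyS' : y ∈ S := hyS
  -- the contradiction
  cases hov : o with
  | true =>
    have h1 : TT a' b' = true := by rw [← ho]; exact hov
    have h2 : TT b' y = true := by rw [hTb]; exact hov
    have h3 : TT a' y = true := htr a' ha'S b' hb'S y hyS' h1 h2
    rw [hTa, hov] at h3
    exact Bool.noConfusion h3
  | false =>
    have h1 : TT b' a' = true := by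
      rw [TT_asymm (Nat.ne_of_gt ha'b'), ← ho, hov]
      rfl
    have h2 : TT a' y = true := by rw [hTa, hov]; rfl
    have h3 : TT b' y = true := htr b' hb'S a' ha'S y hyS' h1 h2
    rw [hTb, hov] at h3
    exact Bool.noConfusion h3

section PrimrecProofs

open Primrec

theorem and_eq_cond (a b : Bool) : (a && b) = cond a b false := by cases a <;> rfl

theorem natrec_succ {β : Type} (z : β) (g : ℕ → β → β) (n : ℕ) :
    (Nat.rec z (fun m ih => g m ih) (n+1) : β) = g n (Nat.rec z (fun m ih => g m ih) n) := rfl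
theorem or_eq_cond (a b : Bool) : (a || b) = cond a true b := by cases a <;> rfl

theorem evB_prim : Primrec fun p : (ℕ × ℕ × ℕ) × ℕ => evB p.1.1 p.1.2.1 p.1.2.2 p.2 :=
  Nat.Partrec.Code.primrec_evaln.comp <|
    Primrec.pair
      (Primrec.pair (snd.comp (snd.comp fst)) ((Primrec.ofNat Code).comp (fst.comp fst)))
      (Primrec₂.natPair.comp (fst.comp (snd.comp fst)) snd)

theorem bestS_prim : Primrec₂ fun (a : ℕ × ℕ × ℕ) (n : ℕ) => bestS a.1 a.2.1 a.2.2 n := by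
  have h := Primrec.nat_rec (f := fun _ : ℕ × ℕ × ℕ => (none : Option ℕ))
    (g := fun a p => cond (evB a.1 a.2.1 a.2.2 p.1).isSome (some p.1) p.2)
    (Primrec.const none)
    (Primrec.cond
      (option_isSome.comp (evB_prim.comp (Primrec.pair fst (fst.comp snd))))
      (option_some.comp (fst.comp snd)) (snd.comp snd))
  refine h.of_eq fun a n => ?_
  induction n with
  | zero => rfl
  | succ n ih => simp only [natrec_succ]; rw [ih, bestS]

theorem gval_prim : Primrec fun p : ℕ × ℕ × ℕ => gval p.1 p.2.1 p.2.2 := by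
  have hbind : Primrec fun p : ℕ × ℕ × ℕ =>
      (bestS p.1 p.2.1 p.2.2 (p.2.2 + 1)).bind fun s => evB p.1 p.2.1 p.2.2 s :=
    option_bind (bestS_prim.comp Primrec.id (succ.comp (snd.comp snd)))
      (evB_prim.comp (Primrec.pair fst snd)).to₂
  exact Primrec.beq.comp (option_getD.comp hbind (Primrec.const 0)) (Primrec.const 1)

theorem pdisj_prim : Primrec₂ pdisj := by
  have h : Primrec₂ fun (x : ℕ) (op : Option (ℕ × ℕ)) =>
      op.casesOn (motive := fun _ => Bool) true
        (fun q => cond (x == q.1) false (cond (x == q.2) false true)) := by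
    refine option_casesOn snd (Primrec.const true) ?_
    exact Primrec.cond (Primrec.beq.comp (fst.comp fst) (fst.comp snd)) (Primrec.const false)
      (Primrec.cond (Primrec.beq.comp (fst.comp fst) (snd.comp snd)) (Primrec.const false)
        (Primrec.const true))
  refine h.of_eq fun x op => ?_
  rcases op with _ | ⟨a, b⟩
  · rfl
  · simp only [pdisj]
    cases x == a <;> cases x == b <;> rfl

theorem disjUpTo_prim :
    Primrec₂ fun (a : List (Option (ℕ × ℕ)) × ℕ) (n : ℕ) => disjUpTo a.1 a.2 n := by
  have h := Primrec.nat_rec (f := fun _ : List (Option (ℕ × ℕ)) × ℕ => true)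
    (g := fun a p => cond p.2 (pdisj a.2 (a.1.getD p.1 none)) false)
    (Primrec.const true)
    (Primrec.cond (snd.comp snd)
      (pdisj_prim.comp (snd.comp fst)
        ((list_getD none).comp (fst.comp fst) (fst.comp snd)))
      (Primrec.const false))
  refine h.of_eq fun a n => ?_
  induction n with
  | zero => rfl
  | succ n ih =>
    simp only [natrec_succ]; rw [ih, disjUpTo, and_eq_cond]

theorem elig_prim :
    Primrec fun p : (List (Option (ℕ × ℕ)) × ℕ × ℕ) × ℕ × ℕ =>
      elig p.1.1 p.1.2.1 p.1.2.2 p.2.1 p.2.2 := by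
  have hL : Primrec fun p : (List (Option (ℕ × ℕ)) × ℕ × ℕ) × ℕ × ℕ => p.1.1 := fst.comp fst
  have he : Primrec fun p : (List (Option (ℕ × ℕ)) × ℕ × ℕ) × ℕ × ℕ => p.1.2.1 :=
    fst.comp (snd.comp fst)
  have hy : Primrec fun p : (List (Option (ℕ × ℕ)) × ℕ × ℕ) × ℕ × ℕ => p.1.2.2 :=
    snd.comp (snd.comp fst)
  have ha : Primrec fun p : (List (Option (ℕ × ℕ)) × ℕ × ℕ) × ℕ × ℕ => p.2.1 := fst.comp snd
  have hb : Primrec fun p : (List (Option (ℕ × ℕ)) × ℕ × ℕ) × ℕ × ℕ => p.2.2 := snd.comp snd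
  have h1 : Primrec fun p : (List (Option (ℕ × ℕ)) × ℕ × ℕ) × ℕ × ℕ =>
      decide (p.2.1 < p.2.2) := (nat_lt.comp ha hb).decide
  have h2 : Primrec fun p : (List (Option (ℕ × ℕ)) × ℕ × ℕ) × ℕ × ℕ =>
      gval p.1.2.1 p.2.1 p.1.2.2 := gval_prim.comp (Primrec.pair he (Primrec.pair ha hy))
  have h3 : Primrec fun p : (List (Option (ℕ × ℕ)) × ℕ × ℕ) × ℕ × ℕ =>
      gval p.1.2.1 p.2.2 p.1.2.2 := gval_prim.comp (Primrec.pair he (Primrec.pair hb hy))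
  have h4 : Primrec fun p : (List (Option (ℕ × ℕ)) × ℕ × ℕ) × ℕ × ℕ =>
      disjUpTo p.1.1 p.2.1 p.1.1.length :=
    disjUpTo_prim.comp (Primrec.pair hL ha) (list_length.comp hL)
  have h5 : Primrec fun p : (List (Option (ℕ × ℕ)) × ℕ × ℕ) × ℕ × ℕ =>
      disjUpTo p.1.1 p.2.2 p.1.1.length :=
    disjUpTo_prim.comp (Primrec.pair hL hb) (list_length.comp hL)
  have h : Primrec fun p : (List (Option (ℕ × ℕ)) × ℕ × ℕ) × ℕ × ℕ =>
      cond (cond (cond (cond (decide (p.2.1 < p.2.2)) (gval p.1.2.1 p.2.1 p.1.2.2) false)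
        (gval p.1.2.1 p.2.2 p.1.2.2) false) (disjUpTo p.1.1 p.2.1 p.1.1.length) false)
        (disjUpTo p.1.1 p.2.2 p.1.1.length) false :=
    Primrec.cond (Primrec.cond (Primrec.cond (Primrec.cond h1 h2 (Primrec.const false)) h3
      (Primrec.const false)) h4 (Primrec.const false)) h5 (Primrec.const false)
  refine h.of_eq fun p => ?_
  rw [elig]
  simp only [← and_eq_cond]

theorem pick_prim :
    Primrec₂ fun (a : List (Option (ℕ × ℕ)) × ℕ × ℕ) (k : ℕ) => pick a.1 a.2.1 a.2.2 k := by
  have hg : Primrec₂ fun (a : List (Option (ℕ × ℕ)) × ℕ × ℕ) (p : ℕ × Option (ℕ × ℕ)) =>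
      p.2.casesOn (motive := fun _ => Option (ℕ × ℕ))
        (cond (elig a.1 a.2.1 a.2.2 (p.1 % a.2.2) (p.1 / a.2.2))
          (some (p.1 % a.2.2, p.1 / a.2.2)) none)
        (fun q => some q) := by
    refine option_casesOn (snd.comp snd) ?_ (option_some.comp snd).to₂
    have hm : Primrec fun q : (List (Option (ℕ × ℕ)) × ℕ × ℕ) × ℕ × Option (ℕ × ℕ) =>
        q.2.1 % q.1.2.2 := nat_mod.comp (fst.comp snd) (snd.comp (snd.comp fst))
    have hd : Primrec fun q : (List (Option (ℕ × ℕ)) × ℕ × ℕ) × ℕ × Option (ℕ × ℕ) =>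
        q.2.1 / q.1.2.2 := nat_div.comp (fst.comp snd) (snd.comp (snd.comp fst))
    exact Primrec.cond (elig_prim.comp (Primrec.pair fst (Primrec.pair hm hd)))
      (option_some.comp (Primrec.pair hm hd)) (Primrec.const none)
  have h := Primrec.nat_rec (f := fun _ : List (Option (ℕ × ℕ)) × ℕ × ℕ => (none : Option (ℕ × ℕ)))
    (g := fun a p => p.2.casesOn (motive := fun _ => Option (ℕ × ℕ))
        (cond (elig a.1 a.2.1 a.2.2 (p.1 % a.2.2) (p.1 / a.2.2))
          (some (p.1 % a.2.2, p.1 / a.2.2)) none)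
        (fun q => some q))
    (Primrec.const none) hg
  refine h.of_eq fun a k => ?_
  induction k with
  | zero => rfl
  | succ k ih =>
    simp only [natrec_succ]; rw [ih, pick]
    rcases pick a.1 a.2.1 a.2.2 k with _ | p <;> rfl

theorem PL_prim : Primrec₂ PL := by
  have h := Primrec.nat_rec (f := fun _ : ℕ => ([] : List (Option (ℕ × ℕ))))
    (g := fun y p => p.2 ++ [pick p.2 p.1 y (y*y)])
    (Primrec.const [])
    (list_append.comp (snd.comp snd)
      (list_cons.comp
        (pick_prim.comp
          (Primrec.pair (snd.comp snd) (Primrec.pair (fst.comp snd) fst))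
          (nat_mul.comp fst fst))
        (Primrec.const [])))
  refine h.of_eq fun y n => ?_
  induction n with
  | zero => rfl
  | succ n ih => simp only [natrec_succ]; rw [ih, PL]

theorem owner_prim :
    Primrec₂ fun (a : List (Option (ℕ × ℕ)) × ℕ) (n : ℕ) => owner a.1 a.2 n := by
  have hg : Primrec₂ fun (a : List (Option (ℕ × ℕ)) × ℕ) (p : ℕ × Option (ℕ × ℕ)) =>
      p.2.casesOn (motive := fun _ => Option (ℕ × ℕ))
        ((a.1.getD p.1 none).casesOn (motive := fun _ => Option (ℕ × ℕ)) none
          (fun q => cond (cond (a.2 == q.1) true (a.2 == q.2)) (some q) none))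
        (fun q => some q) := by
    refine option_casesOn (snd.comp snd) ?_ (option_some.comp snd).to₂
    refine option_casesOn
      ((list_getD none).comp (fst.comp fst) (fst.comp snd)) (Primrec.const none) ?_
    exact Primrec.cond
      (Primrec.cond (Primrec.beq.comp (snd.comp (fst.comp fst)) (fst.comp snd))
        (Primrec.const true) (Primrec.beq.comp (snd.comp (fst.comp fst)) (snd.comp snd)))
      (option_some.comp snd) (Primrec.const none)
  have h := Primrec.nat_rec (f := fun _ : List (Option (ℕ × ℕ)) × ℕ => (none : Option (ℕ × ℕ)))
    (g := fun a p => p.2.casesOn (motive := fun _ => Option (ℕ × ℕ))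
        ((a.1.getD p.1 none).casesOn (motive := fun _ => Option (ℕ × ℕ)) none
          (fun q => cond (cond (a.2 == q.1) true (a.2 == q.2)) (some q) none))
        (fun q => some q))
    (Primrec.const none) hg
  refine h.of_eq fun a n => ?_
  induction n with
  | zero => rfl
  | succ n ih =>
    simp only [natrec_succ]; rw [ih, owner]
    rcases owner a.1 a.2 n with _ | p
    · rcases a.1.getD n none with _ | q
      · rfl
      · dsimp only
        rw [or_eq_cond]
    · rfl

theorem colF_prim : Primrec colF := by
  have hlen : Primrec fun hist : List (List Bool) => hist.length := list_length
  have hinner : Primrec₂ fun (hist : List (List Bool)) (x : ℕ) =>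
      (owner (PL hist.length (hist.length + 1)) x (hist.length + 1)).casesOn
        (motive := fun _ => Bool) true
        (fun q => cond (x == q.1) (!((hist.getD q.2 []).getD q.1 true))
          ((hist.getD q.2 []).getD q.1 true)) := by
    refine option_casesOn
      (owner_prim.comp
        (Primrec.pair
          (PL_prim.comp (hlen.comp fst) (succ.comp (hlen.comp fst))) snd)
        (succ.comp (hlen.comp fst)))
      (Primrec.const true) ?_
    have ho : Primrec fun q : (List (List Bool) × ℕ) × ℕ × ℕ =>
        ((q.1.1.getD q.2.2 []).getD q.2.1 true) :=
      (list_getD true).comp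
        ((list_getD ([] : List Bool)).comp (fst.comp fst) (snd.comp snd))
        (fst.comp snd)
    exact Primrec.cond (Primrec.beq.comp (snd.comp fst) (fst.comp snd))
      (Primrec.not.comp ho) ho
  have h : Primrec fun hist : List (List Bool) =>
      (List.range hist.length).map fun x =>
        (owner (PL hist.length (hist.length + 1)) x (hist.length + 1)).casesOn
          (motive := fun _ => Bool) true
          (fun q => cond (x == q.1) (!((hist.getD q.2 []).getD q.1 true))
            ((hist.getD q.2 []).getD q.1 true)) :=
    list_map (list_range.comp hlen) hinner
  refine h.of_eq fun hist => ?_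
  rw [colF]
  congr 1
  funext x
  rcases owner (PL hist.length (hist.length + 1)) x (hist.length + 1) with _ | q <;> rfl

theorem col_prim : Primrec col := by
  have h : Primrec₂ fun (_ : Unit) (y : ℕ) => col y := by
    refine Primrec.nat_strong_rec _ ((option_some.comp (colF_prim.comp snd)).to₂) ?_
    intro _ n
    rw [← col_eq]
  exact h.comp (Primrec.const ()) Primrec.id

theorem TT_prim : Primrec₂ TT := by
  have h : Primrec fun p : ℕ × ℕ =>
      if p.1 = p.2 then false
      else if p.1 < p.2 then (col p.2).getD p.1 true
      else !((col p.1).getD p.2 true) := by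
    refine Primrec.ite (Primrec.eq.comp fst snd) (Primrec.const false) ?_
    refine Primrec.ite (nat_lt.comp fst snd) ?_ ?_
    · exact (list_getD true).comp (col_prim.comp snd) fst
    · exact Primrec.not.comp ((list_getD true).comp (col_prim.comp fst) snd)
  exact h.to₂.of_eq fun x y => by rw [TT]

theorem TT_computable : Computable₂ TT := TT_prim.to_comp

end PrimrecProofs

end EMC


/-- There is a computable tournament on ℕ with no infinite Δ⁰₂ (limit-computable)
transitive subtournament. -/
theorem computable_tournament_no_delta2_solution :
    ∃ T : ℕ → ℕ → Bool, Computable₂ T ∧ (∀ x, T x x = false) ∧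
      (∀ x y : ℕ, x ≠ y → T x y = !T y x) ∧
      ∀ g : ℕ → ℕ → Bool, Computable₂ g → ∀ D : ℕ → Bool,
        (∀ x, ∃ s₀, ∀ s, s₀ ≤ s → g x s = D x) →
        ¬ ({x | D x = true}.Infinite ∧
            TransitiveFor (fun x y => T x y = true) {x | D x = true}) := by
  refine ⟨EMC.TT, EMC.TT_computable, EMC.TT_irrefl, fun x y h => EMC.TT_asymm h, ?_⟩
  rintro g hg D hlim ⟨hinf, htr⟩
  exact EMC.main hg hlim hinf htr
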